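/- Let k be a nonnegative integer with k ≥ 2, Ω ⊆ ℝ a nonempty open set, and c₀, c₁, c₂, d₀₀ : Ω → ℝ continuous functions. Define D : C^k(Ω) → C(Ω) by D(f)(x) = c₀(x)·f(x)·ln|f(x)| + c₁(x)·f'(x) + c₂(x)·f''(x) + d₀₀(x)·f(x)·(ln|f(x)|)² (with the conventions 0·ln 0 = 0 and 0·(ln 0)² = 0). Then D maps C^k(Ω) into C(Ω) and satisfies the identity (★): D(f·g·h) − f·D(g·h) − g·D(f·h) − h·D(f·g) + f·g·D(h) + f·h·D(g) + g·h·D(f) = 0 for all f, g, h ∈ C^k(Ω). -/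

import Mathlib

open Real Filter

private lemma contMulLogSq : Continuous fun t : ℝ => t * (Real.log t) ^ 2 := by
  rw [continuous_iff_continuousAt]
  intro t
  rcases eq_or_ne t 0 with rfl | ht
  · have hb : Continuous fun s : ℝ => 4 * (Real.sqrt |s| * Real.log (Real.sqrt |s|)) ^ 2 :=
      continuous_const.mul
        ((Real.continuous_mul_log.comp (Real.continuous_sqrt.comp continuous_abs)).pow 2)
    have hb0 : Filter.Tendsto (fun s : ℝ => 4 * (Real.sqrt |s| * Real.log (Real.sqrt |s|)) ^ 2)
        (nhds 0) (nhds 0) := by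
      have h := hb.tendsto 0
      simpa using h
    have key : ∀ s : ℝ, ‖s * (Real.log s) ^ 2‖
        ≤ 4 * (Real.sqrt |s| * Real.log (Real.sqrt |s|)) ^ 2 := by
      intro s
      have h1 : Real.log s = 2 * Real.log (Real.sqrt |s|) := by
        conv_lhs => rw [← Real.log_abs, ← Real.sq_sqrt (abs_nonneg s), Real.log_pow]
        push_cast; ring
      have h2 : |s| = Real.sqrt |s| ^ 2 := (Real.sq_sqrt (abs_nonneg s)).symm
      have h3 : ‖s * (Real.log s) ^ 2‖ = |s| * (Real.log s) ^ 2 := by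
        rw [Real.norm_eq_abs, abs_mul, abs_pow, sq_abs]
      rw [h3, h1]
      nlinarith [h2, sq_nonneg (Real.log (Real.sqrt |s|))]
    have : Filter.Tendsto (fun s : ℝ => s * (Real.log s) ^ 2) (nhds 0) (nhds 0) :=
      squeeze_zero_norm key hb0
    simpa [ContinuousAt] using this
  · exact continuousAt_id.mul ((Real.continuousAt_log ht).pow 2)

private lemma L3 (a b c : ℝ) :
    a * b * c * Real.log |a * b * c| - a * (b * c * Real.log |b * c|)
      - b * (a * c * Real.log |a * c|) - c * (a * b * Real.log |a * b|)
      + a * b * (c * Real.log |c|) + a * c * (b * Real.log |b|)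
      + b * c * (a * Real.log |a|) = 0 := by
  simp only [Real.log_abs]
  rcases eq_or_ne a 0 with rfl | ha; · simp
  rcases eq_or_ne b 0 with rfl | hb; · simp
  rcases eq_or_ne c 0 with rfl | hc; · simp
  rw [Real.log_mul (mul_ne_zero ha hb) hc, Real.log_mul ha hb, Real.log_mul ha hc,
    Real.log_mul hb hc]
  ring

private lemma Q3 (a b c : ℝ) :
    a * b * c * (Real.log |a * b * c|) ^ 2 - a * (b * c * (Real.log |b * c|) ^ 2)
      - b * (a * c * (Real.log |a * c|) ^ 2) - c * (a * b * (Real.log |a * b|) ^ 2)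
      + a * b * (c * (Real.log |c|) ^ 2) + a * c * (b * (Real.log |b|) ^ 2)
      + b * c * (a * (Real.log |a|) ^ 2) = 0 := by
  simp only [Real.log_abs]
  rcases eq_or_ne a 0 with rfl | ha; · simp
  rcases eq_or_ne b 0 with rfl | hb; · simp
  rcases eq_or_ne c 0 with rfl | hc; · simp
  rw [Real.log_mul (mul_ne_zero ha hb) hc, Real.log_mul ha hb, Real.log_mul ha hc,
    Real.log_mul hb hc]
  ring

private lemma pair_dd {f g : ℝ → ℝ} {s : Set ℝ} (hs : IsOpen s) {x : ℝ} (hx : x ∈ s)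
    (hf : DifferentiableOn ℝ f s) (hg : DifferentiableOn ℝ g s)
    (hf' : DifferentiableAt ℝ (deriv f) x) (hg' : DifferentiableAt ℝ (deriv g) x) :
    deriv (deriv (fun y => f y * g y)) x
      = deriv (deriv f) x * g x + 2 * deriv f x * deriv g x + f x * deriv (deriv g) x := by
  have hfx : DifferentiableAt ℝ f x := hf.differentiableAt (hs.mem_nhds hx)
  have hgx : DifferentiableAt ℝ g x := hg.differentiableAt (hs.mem_nhds hx)
  have hev : deriv (fun y => f y * g y) =ᶠ[nhds x]
      fun y => deriv f y * g y + f y * deriv g y := by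
    filter_upwards [hs.mem_nhds hx] with y hy
    exact deriv_mul (hf.differentiableAt (hs.mem_nhds hy)) (hg.differentiableAt (hs.mem_nhds hy))
  rw [hev.deriv_eq, deriv_fun_add (f := fun y => deriv f y * g y) (g := fun y => f y * deriv g y)
    (hf'.mul hgx) (hfx.mul hg'), deriv_fun_mul hf' hgx,
    deriv_fun_mul hfx hg']
  ring


/-- (Converse of the main theorem.) Let `k ≥ 2`, let
`c₀, c₁, c₂, d₀₀ : Ω → ℝ` be continuous and define
`D(f)(x) = c₀(x)·f(x)·ln|f(x)| + c₁(x)·f'(x) + c₂(x)·f''(x) + d₀₀(x)·f(x)·(ln|f(x)|)²`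
(the conventions `0·ln 0 = 0`, `0·(ln 0)² = 0` hold automatically since `Real.log 0 = 0`).
Then `D` maps `C^k(Ω)` into `C(Ω)` and satisfies the identity (★). -/
theorem statement12 (k : ℕ) (hk : 2 ≤ k) (Ω : Set ℝ) (hΩ : IsOpen Ω) (hΩne : Ω.Nonempty)
    (c₀ c₁ c₂ d₀₀ : ℝ → ℝ)
    (hc₀ : ContinuousOn c₀ Ω) (hc₁ : ContinuousOn c₁ Ω)
    (hc₂ : ContinuousOn c₂ Ω) (hd₀₀ : ContinuousOn d₀₀ Ω)
    (D : (ℝ → ℝ) → (ℝ → ℝ))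
    (hD : ∀ (f : ℝ → ℝ) (x : ℝ),
      D f x = c₀ x * f x * Real.log |f x| + c₁ x * deriv f x + c₂ x * deriv (deriv f) x
        + d₀₀ x * f x * (Real.log |f x|) ^ 2) :
    (∀ f : ℝ → ℝ, ContDiffOn ℝ k f Ω → ContinuousOn (D f) Ω) ∧
    (∀ f g h : ℝ → ℝ,
      ContDiffOn ℝ k f Ω → ContDiffOn ℝ k g Ω → ContDiffOn ℝ k h Ω →
      ∀ x ∈ Ω,
        D (fun y => f y * g y * h y) x
          - f x * D (fun y => g y * h y) x
          - g x * D (fun y => f y * h y) x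
          - h x * D (fun y => f y * g y) x
          + f x * g x * D h x
          + f x * h x * D g x
          + g x * h x * D f x = 0) := by
  have h2k : (1 : WithTop ℕ∞) + 1 ≤ (k : WithTop ℕ∞) := by exact_mod_cast hk
  have h1k : (1 : WithTop ℕ∞) ≤ (k : WithTop ℕ∞) := le_trans (by norm_num) h2k
  constructor
  · intro f hf
    have hDf : D f = fun x => c₀ x * f x * Real.log |f x| + c₁ x * deriv f x
        + c₂ x * deriv (deriv f) x + d₀₀ x * f x * (Real.log |f x|) ^ 2 := funext (hD f)
    rw [hDf]
    have hfc : ContinuousOn f Ω := hf.continuousOn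
    have h1 : ContinuousOn (fun x => f x * Real.log |f x|) Ω := by
      simp only [Real.log_abs]
      have := Real.continuous_mul_log.comp_continuousOn hfc
      exact this
    have h2 : ContinuousOn (fun x => f x * (Real.log |f x|) ^ 2) Ω := by
      simp only [Real.log_abs]
      have := contMulLogSq.comp_continuousOn hfc
      exact this
    have hd1 : ContinuousOn (deriv f) Ω := hf.continuousOn_deriv_of_isOpen hΩ h1k
    have hd2 : ContDiffOn ℝ 1 (deriv f) Ω := hf.deriv_of_isOpen hΩ h2k
    have hdd : ContinuousOn (deriv (deriv f)) Ω :=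
      hd2.continuousOn_deriv_of_isOpen hΩ le_rfl
    exact ((((hc₀.mul h1).congr fun x _ => (mul_assoc _ _ _)).add (hc₁.mul hd1)).add
      (hc₂.mul hdd)).add ((hd₀₀.mul h2).congr fun x _ => (mul_assoc _ _ _))
  · intro f g h hf hg hh x hx
    have hfd : DifferentiableOn ℝ f Ω := hf.differentiableOn (by exact_mod_cast (by omega : k ≠ 0))
    have hgd : DifferentiableOn ℝ g Ω := hg.differentiableOn (by exact_mod_cast (by omega : k ≠ 0))
    have hhd : DifferentiableOn ℝ h Ω := hh.differentiableOn (by exact_mod_cast (by omega : k ≠ 0))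
    have hfd' : DifferentiableOn ℝ (deriv f) Ω :=
      (hf.deriv_of_isOpen hΩ h2k).differentiableOn one_ne_zero
    have hgd' : DifferentiableOn ℝ (deriv g) Ω :=
      (hg.deriv_of_isOpen hΩ h2k).differentiableOn one_ne_zero
    have hhd' : DifferentiableOn ℝ (deriv h) Ω :=
      (hh.deriv_of_isOpen hΩ h2k).differentiableOn one_ne_zero
    have hfx : DifferentiableAt ℝ f x := hfd.differentiableAt (hΩ.mem_nhds hx)
    have hgx : DifferentiableAt ℝ g x := hgd.differentiableAt (hΩ.mem_nhds hx)
    have hhx : DifferentiableAt ℝ h x := hhd.differentiableAt (hΩ.mem_nhds hx)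
    have hfx' : DifferentiableAt ℝ (deriv f) x := hfd'.differentiableAt (hΩ.mem_nhds hx)
    have hgx' : DifferentiableAt ℝ (deriv g) x := hgd'.differentiableAt (hΩ.mem_nhds hx)
    have hhx' : DifferentiableAt ℝ (deriv h) x := hhd'.differentiableAt (hΩ.mem_nhds hx)
    -- first derivatives of products
    have dfg : deriv (fun y => f y * g y) x = deriv f x * g x + f x * deriv g x :=
      deriv_mul hfx hgx
    have dfh : deriv (fun y => f y * h y) x = deriv f x * h x + f x * deriv h x :=
      deriv_mul hfx hhx
    have dgh : deriv (fun y => g y * h y) x = deriv g x * h x + g x * deriv h x :=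
      deriv_mul hgx hhx
    have dfgh : deriv (fun y => f y * g y * h y) x
        = (deriv f x * g x + f x * deriv g x) * h x + f x * g x * deriv h x := by
      rw [deriv_fun_mul (c := fun y => f y * g y) (hfx.mul hgx) hhx, deriv_fun_mul hfx hgx]
    -- second derivatives of pair products
    have ddfg := pair_dd hΩ hx hfd hgd hfx' hgx'
    have ddfh := pair_dd hΩ hx hfd hhd hfx' hhx'
    have ddgh := pair_dd hΩ hx hgd hhd hgx' hhx'
    -- differentiability of deriv (f*g) at x
    have hevfg : deriv (fun y => f y * g y) =ᶠ[nhds x]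
        fun y => deriv f y * g y + f y * deriv g y := by
      filter_upwards [hΩ.mem_nhds hx] with y hy
      exact deriv_mul (hfd.differentiableAt (hΩ.mem_nhds hy))
        (hgd.differentiableAt (hΩ.mem_nhds hy))
    have hfg' : DifferentiableAt ℝ (deriv (fun y => f y * g y)) x :=
      (((hfx'.mul hgx).add (hfx.mul hgx')).congr_of_eventuallyEq hevfg)
    have ddfgh : deriv (deriv (fun y => f y * g y * h y)) x
        = deriv (deriv (fun y => f y * g y)) x * h x
          + 2 * deriv (fun y => f y * g y) x * deriv h x
          + (f x * g x) * deriv (deriv h) x :=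
      pair_dd hΩ hx (hfd.mul hgd) hhd hfg' hhx'
    simp only [hD]
    rw [dfgh, ddfgh, ddfg, ddfh, ddgh, dfg, dfh, dgh]
    linear_combination c₀ x * L3 (f x) (g x) (h x) + d₀₀ x * Q3 (f x) (g x) (h x)
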